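/- If T is an invertible element of the algebra E of column-finite N×N matrices over F such that T⁻¹ M_∞(F) T = M_∞(F), then both T and T⁻¹ have finitely many nonzero entries in every row (i.e., T ∈ E₀). -/

import Mathlib

noncomputable section

/-- The algebra `E` of column-finite `ℕ × ℕ` matrices over `F`, realized as the
algebra of all `F`-linear endomorphisms of the free module `⊕_{i ∈ ℕ} F eᵢ`. -/
abbrev EMat (F : Type*) [Field F] := Module.End F (ℕ →₀ F)

/-- The `(i,j)` entry of (the matrix of) an endomorphism `f`. -/
def entry {F : Type*} [Field F] (f : EMat F) (i j : ℕ) : F :=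
  f (Finsupp.single j 1) i

/-- `f` has finitely many nonzero entries in each row. Together with the
automatic column-finiteness this says `f` lies in `E₀`. -/
def RowFinite {F : Type*} [Field F] (f : EMat F) : Prop :=
  ∀ i : ℕ, {j : ℕ | entry f i j ≠ 0}.Finite

/-- `M_∞(F)`: the nonunital algebra of finitary matrices (finitely many
nonzero entries overall), i.e. endomorphisms killing all but finitely many
basis vectors. -/
def Mfin (F : Type*) [Field F] : NonUnitalSubalgebra F (EMat F) where
  carrier := {f | {j : ℕ | f (Finsupp.single j 1) ≠ 0}.Finite}
  zero_mem' := by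
    simp
  add_mem' := by
    intro a b ha hb
    refine ((ha.union hb).subset ?_)
    intro j hj
    simp only [Set.mem_setOf_eq, LinearMap.add_apply] at hj ⊢
    by_contra h
    try push_neg at h
    simp only [Set.mem_union, Set.mem_setOf_eq, not_or, not_not] at h
    rw [h.1, h.2, add_zero] at hj
    exact hj rfl
  mul_mem' := by
    intro a b ha hb
    refine hb.subset ?_
    intro j hj
    simp only [Set.mem_setOf_eq] at hj ⊢
    intro h
    apply hj
    show a (b (Finsupp.single j 1)) = 0
    rw [h]
    simp
  smul_mem' := by
    intro c a ha
    refine ha.subset ?_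
    intro j hj
    simp only [Set.mem_setOf_eq, LinearMap.smul_apply] at hj ⊢
    intro h
    rw [h] at hj
    simp at hj

instance (F : Type*) [Field F] : NonUnitalRing (Mfin F) :=
  NonUnitalSubalgebra.toNonUnitalRing (R := F) (A := EMat F) (Mfin F)

/-- The shift `c = Σ_{i} e_{i+1,i}` (sends basis vector `eᵢ` to `e_{i+1}`). -/
def cSh (F : Type*) [Field F] : EMat F :=
  Finsupp.lsum F fun i => Finsupp.lsingle (i + 1)

/-- The shift `c* = Σ_{i} e_{i,i+1}` (sends `e_{i+1}` to `eᵢ` and `e₀` to `0`). -/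
def cShStar (F : Type*) [Field F] : EMat F :=
  Finsupp.lsum F fun i => if i = 0 then 0 else Finsupp.lsingle (i - 1)



/-- The matrix unit `e_{ii}`. -/
def eii (F : Type*) [Field F] (i : ℕ) : EMat F :=
  Finsupp.lsingle i ∘ₗ Finsupp.lapply i

lemma eii_apply {F : Type*} [Field F] (i : ℕ) (x : ℕ →₀ F) :
    eii F i x = Finsupp.single i (x i) := rfl

lemma eii_mem_Mfin (F : Type*) [Field F] (i : ℕ) : eii F i ∈ Mfin F := by
  refine (Set.finite_singleton i).subset ?_
  intro j hj
  simp only [Set.mem_setOf_eq, eii_apply] at hj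
  by_contra h
  simp only [Set.mem_singleton_iff] at h
  apply hj
  rw [Finsupp.single_apply, if_neg h]
  simp

lemma rowFinite_of_conj {F : Type*} [Field F] (T S : EMat F)
    (hTS : T * S = 1) (h : ∀ i, S * eii F i * T ∈ Mfin F) : RowFinite T := by
  intro i
  have hSinj : ∀ v : ℕ →₀ F, S v = 0 → v = 0 := by
    intro v hv
    have : (T * S) v = v := by rw [hTS]; rfl
    rw [Module.End.mul_apply, hv, map_zero] at this
    exact this.symm
  refine (h i).subset ?_
  intro j hj
  simp only [Set.mem_setOf_eq] at hj ⊢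
  rw [Module.End.mul_apply, Module.End.mul_apply, eii_apply]
  have heq : Finsupp.single i (T (Finsupp.single j 1) i) =
      (entry T i j) • Finsupp.single i (1 : F) := by
    rw [Finsupp.smul_single', mul_one]; rfl
  rw [heq, map_smul]
  intro h0
  have h1 : S (Finsupp.single i (1 : F)) = 0 := by
    have := congrArg (fun x => (entry T i j)⁻¹ • x) h0
    simpa [smul_smul, inv_mul_cancel₀ hj] using this
  exact one_ne_zero (Finsupp.single_eq_zero.mp (hSinj _ h1))

/-- If `T` is invertible in `E` (column-finite matrices) and
`T⁻¹ M_∞(F) T = M_∞(F)`, then `T, T⁻¹ ∈ E₀`, i.e. they are also row-finite. -/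
theorem conj_Mfin_rowFinite (F : Type*) [Field F] (T S : EMat F)
    (hTS : T * S = 1) (hST : S * T = 1)
    (hconj : (fun a => S * a * T) '' (Mfin F : Set (EMat F)) = (Mfin F : Set (EMat F))) :
    RowFinite T ∧ RowFinite S := by
  constructor
  · refine rowFinite_of_conj T S hTS (fun i => ?_)
    have : S * eii F i * T ∈ (fun a => S * a * T) '' (Mfin F : Set (EMat F)) :=
      ⟨eii F i, eii_mem_Mfin F i, rfl⟩
    rw [hconj] at this
    exact this
  · refine rowFinite_of_conj S T hST (fun i => ?_)
    have hmem : eii F i ∈ (fun a => S * a * T) '' (Mfin F : Set (EMat F)) := by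
      rw [hconj]; exact eii_mem_Mfin F i
    obtain ⟨a, ha, haeq⟩ := hmem
    have : T * eii F i * S = a := by
      rw [← haeq]
      calc T * (S * a * T) * S = (T * S) * a * (T * S) := by noncomm_ring
        _ = a := by rw [hTS, one_mul, mul_one]
    rw [this]
    exact ha

end
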